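/- Let G be a complete multipartite graph of order n. Then G has a Hamiltonian path if and only if its independence number satisfies α(G) ≤ ⌈n/2⌉. -/

import Mathlib

open Finset SimpleGraph

/-- Along a list in which no two consecutive elements both satisfy `P`, the number of
elements satisfying `P` is at most half (rounded up) of the length. -/
theorem aux_countP_le {α : Type*} (P : α → Bool) :
    ∀ l : List α, l.Chain' (fun a b => ¬(P a = true ∧ P b = true)) →
      l.countP P ≤ (l.length + 1) / 2
  | [] => by simp
  | [a] => by
    intro _
    by_cases h : P a <;> simp [List.countP_cons, h]
  | a :: b :: t => by
    intro h
    change List.IsChain _ (a :: b :: t) at h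
    rw [List.isChain_cons_cons] at h
    have iht := aux_countP_le P t h.2.tail
    have hab := h.1
    by_cases ha : P a = true <;> by_cases hb : P b = true <;>
      simp only [List.countP_cons, List.length_cons, ha, hb, if_true, if_false] <;>
      simp_all <;> omega

/-- From a list that is a chain for adjacency, build a walk with that support. -/
theorem aux_walk_of_chain {α : Type*} {G : SimpleGraph α} :
    ∀ (x : α) (l : List α), List.Chain G.Adj x l →
      ∃ v, ∃ p : G.Walk x v, p.support = x :: l
  | x, [], _ => ⟨x, SimpleGraph.Walk.nil, rfl⟩
  | x, y :: t, h => by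
    change List.IsChain _ (x :: y :: t) at h
    rw [List.isChain_cons_cons] at h
    obtain ⟨v, p, hp⟩ := aux_walk_of_chain y t h.2
    exact ⟨v, SimpleGraph.Walk.cons h.1 p, by simp [hp]⟩

/-- Greedy construction: if every colour class of a nonempty finite set has size at most
`⌈n/2⌉`, and a possibly-specified colour `c` has class size at most `⌊n/2⌋`, then the set can
be arranged in a list with no two consecutive elements of the same colour, starting with a
colour different from `c`. -/
theorem aux_greedy {α ι : Type*} [DecidableEq α] [DecidableEq ι] (f : α → ι) :
    ∀ n (s : Finset α), s.card = n → 0 < n →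
    (∀ i, (s.filter (fun a => f a = i)).card ≤ (n + 1) / 2) →
    ∀ c : Option ι, (∀ i, c = some i → (s.filter (fun a => f a = i)).card ≤ n / 2) →
    ∃ (x : α) (l : List α), (x :: l).Nodup ∧ (x :: l).toFinset = s ∧
      (x :: l).Chain' (fun a b => f a ≠ f b) ∧ some (f x) ≠ c := by
  intro n
  induction n using Nat.strong_induction_on with
  | _ n IH =>
  intro s hcard hpos hmax c hc
  classical
  set t := s.filter (fun a => some (f a) ≠ c) with ht
  have htne : t.Nonempty := by
    rcases c with _ | c0
    · rw [ht]
      have : s.Nonempty := Finset.card_pos.mp (hcard ▸ hpos)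
      obtain ⟨z, hz⟩ := this
      exact ⟨z, Finset.mem_filter.mpr ⟨hz, by simp⟩⟩
    · by_contra hemp
      rw [Finset.not_nonempty_iff_eq_empty] at hemp
      have hsub : s ⊆ s.filter (fun a => f a = c0) := by
        intro z hz
        rw [Finset.mem_filter]
        refine ⟨hz, ?_⟩
        by_contra hne
        have : z ∈ t := Finset.mem_filter.mpr ⟨hz, by simpa using fun h => hne h⟩
        simp [hemp] at this
      have h1 := Finset.card_le_card hsub
      have h2 := hc c0 rfl
      omega
  obtain ⟨x, hxt, hxmax⟩ :=
    t.exists_max_image (fun a => (s.filter (fun b => f b = f a)).card) htne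
  have hxs : x ∈ s := (Finset.mem_filter.mp hxt).1
  have hxc : some (f x) ≠ c := by
    have := (Finset.mem_filter.mp hxt).2
    simpa using this
  by_cases hn1 : n = 1
  · refine ⟨x, [], by simp, ?_, List.isChain_singleton x, hxc⟩
    have : s = {x} := by
      apply Finset.eq_singleton_iff_unique_mem.mpr
      refine ⟨hxs, fun y hy => ?_⟩
      by_contra hne
      have : ({x, y} : Finset α) ⊆ s := by
        intro z hz
        rcases Finset.mem_insert.mp hz with h | h
        · exact h ▸ hxs
        · exact (Finset.mem_singleton.mp h) ▸ hy
      have hcard2 : ({x, y} : Finset α).card = 2 := by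
        rw [Finset.card_insert_of_notMem (by simpa using fun h => hne h.symm)]
        simp
      have := Finset.card_le_card this
      omega
    simp [this]
  · set s' := s.erase x with hs'
    have hcard' : s'.card = n - 1 := by
      rw [hs', Finset.card_erase_of_mem hxs, hcard]
    have hpos' : 0 < n - 1 := by omega
    have key : ∀ j, j ≠ f x → (s.filter (fun a => f a = j)).card ≤ n / 2 := by
      intro j hj
      by_cases hcj : c = some j
      · exact hc j hcj
      · by_cases hempty : (s.filter (fun a => f a = j)) = ∅
        · simp [hempty]
        · obtain ⟨y, hy⟩ := Finset.nonempty_iff_ne_empty.mpr hempty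
          rw [Finset.mem_filter] at hy
          have hyt : y ∈ t := Finset.mem_filter.mpr ⟨hy.1, by
            simp only [hy.2]
            exact fun h => hcj h.symm⟩
          have hle := hxmax y hyt
          rw [hy.2] at hle
          by_contra hgt
          push_neg at hgt
          have hgt2 : n / 2 < (s.filter (fun b => f b = f x)).card := lt_of_lt_of_le hgt hle
          have hdisj : Disjoint (s.filter (fun a => f a = j)) (s.filter (fun b => f b = f x)) := by
            rw [Finset.disjoint_left]
            intro z hz1 hz2
            rw [Finset.mem_filter] at hz1 hz2
            exact hj (hz1.2 ▸ hz2.2 ▸ rfl)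
          have hAB : (s.filter (fun a => f a = j) ∪ s.filter (fun b => f b = f x)) ⊆ s :=
            Finset.union_subset (Finset.filter_subset _ s) (Finset.filter_subset _ s)
          have hunion := Finset.card_le_card hAB
          rw [Finset.card_union_of_disjoint hdisj, hcard] at hunion
          omega
    have hs'f : ∀ j, (s'.filter (fun a => f a = j)).card =
        if j = f x then (s.filter (fun a => f a = j)).card - 1
        else (s.filter (fun a => f a = j)).card := by
      intro j
      rw [hs', Finset.filter_erase]
      split
      · next h =>
        rw [Finset.card_erase_of_mem (Finset.mem_filter.mpr ⟨hxs, h.symm⟩)]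
      · next h =>
        rw [Finset.erase_eq_of_notMem]
        simp only [Finset.mem_filter, not_and]
        exact fun _ hfx => h hfx.symm
    have hmax' : ∀ i, (s'.filter (fun a => f a = i)).card ≤ ((n - 1) + 1) / 2 := by
      intro i
      rw [hs'f]
      have h1 := hmax i
      have h2 := hmax (f x)
      split
      · omega
      · next h => have := key i h; omega
    have hc' : ∀ i, (some (f x) : Option ι) = some i →
        (s'.filter (fun a => f a = i)).card ≤ (n - 1) / 2 := by
      intro i hi
      have hi' : i = f x := (Option.some_injective ι hi).symm
      rw [hs'f]
      have h2 := hmax (f x)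
      simp only [hi', if_true]
      have hxmem : x ∈ s.filter (fun a => f a = f x) := Finset.mem_filter.mpr ⟨hxs, rfl⟩
      have hpos2 : 0 < (s.filter (fun a => f a = f x)).card := Finset.card_pos.mpr ⟨x, hxmem⟩
      omega
    obtain ⟨y, l, hnd, htf, hch, hyc⟩ :=
      IH (n - 1) (by omega) s' hcard' hpos' hmax' (some (f x)) hc'
    have hxnot : x ∉ (y :: l) := by
      intro hmem
      have : x ∈ (y :: l).toFinset := List.mem_toFinset.mpr hmem
      rw [htf, hs'] at this
      exact (Finset.notMem_erase x s) this
    refine ⟨x, y :: l, List.nodup_cons.mpr ⟨hxnot, hnd⟩, ?_, ?_, hxc⟩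
    · rw [List.toFinset_cons, htf, hs', Finset.insert_erase hxs]
    · change List.IsChain _ (x :: y :: l)
      rw [List.isChain_cons_cons]
      refine ⟨?_, hch⟩
      intro heq
      exact hyc (by rw [heq])

/-- A complete multipartite graph of order `n` has a Hamiltonian path if and only if its
independence number is at most `⌈n/2⌉`. -/
theorem completeMultipartite_traceable_iff {ι : Type} [Fintype ι] [DecidableEq ι]
    (V : ι → Type) [∀ i, Fintype (V i)] [∀ i, DecidableEq (V i)]
    [Nonempty (Σ i, V i)] :
    (∃ (u v : Σ i, V i) (p : (completeMultipartiteGraph V).Walk u v), p.IsHamiltonian) ↔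
      (∀ s : Finset (Σ i, V i),
        (∀ a ∈ s, ∀ b ∈ s, a ≠ b → ¬ (completeMultipartiteGraph V).Adj a b) →
        s.card ≤ (Fintype.card (Σ i, V i) + 1) / 2) := by
  classical
  have hadj : ∀ a b : Σ i, V i, (completeMultipartiteGraph V).Adj a b ↔ a.1 ≠ b.1 := by
    intro a b; simp [completeMultipartiteGraph]
  have hn : 0 < Fintype.card (Σ i, V i) := Fintype.card_pos
  set n := Fintype.card (Σ i, V i) with hndef
  constructor
  · rintro ⟨u, v, p, hp⟩ s hs
    by_cases hcard : s.card ≤ 1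
    · omega
    · -- s has at least two elements, all in the same part
      obtain ⟨a, ha, b, hb, hab⟩ := (Finset.one_lt_card (s := s)).mp (by omega)
      have hpart : ∀ z ∈ s, z.1 = a.1 := by
        intro z hz
        by_cases hza : z = a
        · rw [hza]
        · have := hs z hz a ha hza
          rw [hadj] at this
          push_neg at this
          exact this
      set P : (Σ i, V i) → Bool := fun z => decide (z.1 = a.1) with hP
      have hlen : p.support.length = n := by
        rw [SimpleGraph.Walk.length_support, hp.length_eq]
        omega
      have hchain : p.support.Chain' (fun x y => ¬(P x = true ∧ P y = true)) := by
        apply List.IsChain.imp _ (p.isChain_adj_support)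
        intro x y hxy ⟨h1, h2⟩
        rw [hP] at h1 h2
        simp only [decide_eq_true_eq] at h1 h2
        rw [hadj] at hxy
        exact hxy (h1.trans h2.symm)
      have hcount := aux_countP_le P p.support hchain
      rw [hlen] at hcount
      have hsub : s ⊆ (p.support.filter P).toFinset := by
        intro z hz
        rw [List.mem_toFinset, List.mem_filter]
        refine ⟨hp.mem_support z, ?_⟩
        rw [hP]
        simp [hpart z hz]
      have hnodup : (p.support.filter P).Nodup := hp.isPath.support_nodup.filter P
      have h1 : s.card ≤ (p.support.filter P).length :=
        le_trans (Finset.card_le_card hsub) (le_of_eq (List.toFinset_card_of_nodup hnodup))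
      have h2 : (p.support.filter P).length = p.support.countP P :=
        List.countP_eq_length_filter.symm
      omega
  · intro hindep
    have hclass : ∀ i, ((Finset.univ : Finset (Σ i, V i)).filter
        (fun a => a.1 = i)).card ≤ (n + 1) / 2 := by
      intro i
      apply hindep
      intro a ha b hb hab hadj'
      rw [hadj] at hadj'
      rw [Finset.mem_filter] at ha hb
      exact hadj' (ha.2.trans hb.2.symm)
    obtain ⟨x, l, hnd, htf, hch, -⟩ :=
      aux_greedy (fun z : Σ i, V i => z.1) n Finset.univ (by rw [hndef]; simp) hn hclass
        none (by simp)
    have hchain : List.Chain (completeMultipartiteGraph V).Adj x l := by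
      have h2 : List.Chain' (completeMultipartiteGraph V).Adj (x :: l) := by
        apply List.IsChain.imp _ hch
        intro a b h
        rw [hadj]
        exact h
      exact h2
    obtain ⟨v, p, hps⟩ := aux_walk_of_chain x l hchain
    refine ⟨x, v, p, ?_⟩
    apply SimpleGraph.Walk.IsPath.isHamiltonian_of_mem
    · exact SimpleGraph.Walk.IsPath.mk' (by rw [hps]; exact hnd)
    · intro w
      have : w ∈ (x :: l).toFinset := by rw [htf]; exact Finset.mem_univ w
      rw [hps]
      exact List.mem_toFinset.mp this
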